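/- arXiv:2004.01500 — 5 statements merged into one kernel-verified Lean document; each statement's English description precedes it below -/
import Mathlib

section
/- Let V = {v₁, …, v_r} be a finite subset of ℝᵈ and Π a collection of nonempty subsets of V such that the union of all members of Π equals V, no member of Π is contained in another, and the Min-Value Condition holds: for every β ∈ ℝᵈ there is a unique α ∈ ℝʳ with β = Σ αᵢ vᵢ and min{αᵢ : vᵢ ∈ P} = 0 for every P ∈ Π. Then for every subset S ⊆ V containing no member of Π, the elements of S are linearly independent over ℝ. -/
open Finset

/-- A pseudo-fan datum: a finite family of vectors `V : Fin r → ℝᵈ` together with a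
collection `Pi` of subsets of the index set such that each member is nonempty,
the members cover the index set, and no member is contained in another. -/
def IsPseudoFan (d r : ℕ) (V : Fin r → (Fin d → ℝ)) (Pi : Finset (Finset (Fin r))) : Prop :=
  (∀ P ∈ Pi, P.Nonempty) ∧ (∀ i : Fin r, ∃ P ∈ Pi, i ∈ P) ∧
  (∀ P ∈ Pi, ∀ Q ∈ Pi, P ⊆ Q → P = Q)

/-- The Min-Value Condition: every `β ∈ ℝᵈ` has a unique coefficient vector
`α ∈ ℝʳ` with `β = Σ αᵢ vᵢ` and `min {αᵢ : i ∈ P} = 0` for each `P ∈ Pi`. -/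
def MVC (d r : ℕ) (V : Fin r → (Fin d → ℝ)) (Pi : Finset (Finset (Fin r))) : Prop :=
  ∀ β : Fin d → ℝ, ∃! α : Fin r → ℝ,
    β = ∑ i, α i • V i ∧
    ∀ P ∈ Pi, (∀ i ∈ P, 0 ≤ α i) ∧ ∃ i ∈ P, α i = 0

/-- The cone generated by the vectors indexed by `S`: nonnegative combinations. -/
def coneOfIdx (d r : ℕ) (V : Fin r → (Fin d → ℝ)) (S : Finset (Fin r)) : Set (Fin d → ℝ) :=
  {x | ∃ lam : Fin r → ℝ, (∀ i, 0 ≤ lam i) ∧ (∀ i, i ∉ S → lam i = 0) ∧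
    x = ∑ i, lam i • V i}

theorem stmt_4 (d r : ℕ) (V : Fin r → (Fin d → ℝ)) (Pi : Finset (Finset (Fin r)))
    (hpf : IsPseudoFan d r V Pi) (hmvc : MVC d r V Pi)
    (S : Finset (Fin r)) (hS : ∀ P ∈ Pi, ¬ P ⊆ S) :
    LinearIndependent ℝ (fun i : S => V i) := by
  obtain ⟨hne, hcov, hinc⟩ := hpf
  rw [Fintype.linearIndependent_iff]
  intro g hg j
  classical
  set c : Fin r → ℝ := fun i => if h : i ∈ S then g ⟨i, h⟩ else 0 with hc
  have hsum : ∑ i, c i • V i = 0 := by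
    rw [← hg]
    rw [show (∑ i : S, g i • V i) = ∑ i ∈ S, c i • V i by
      rw [← Finset.sum_coe_sort S (fun i => c i • V i)]
      apply Finset.sum_congr rfl
      intro i _
      simp [hc, i.2]]
    symm
    apply Finset.sum_subset (Finset.subset_univ S)
    intro i _ hiS
    simp [hc, hiS]
  set α : Fin r → ℝ := fun i => max (c i) 0 with hα
  set α' : Fin r → ℝ := fun i => max (-c i) 0 with hα'
  have hca : ∀ i, c i = α i - α' i := by
    intro i
    simp only [hα, hα']
    rcases le_total (c i) 0 with h | h
    · rw [max_eq_right h, max_eq_left (by linarith)]; ring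
    · rw [max_eq_left h, max_eq_right (by linarith)]; ring
  have hsum2 : ∑ i, α i • V i = ∑ i, α' i • V i := by
    rw [← sub_eq_zero, ← Finset.sum_sub_distrib, ← hsum]
    apply Finset.sum_congr rfl
    intro i _
    rw [hca i, sub_smul]
  have hzero : ∀ P ∈ Pi, ∃ i ∈ P, c i = 0 := by
    intro P hP
    obtain ⟨i, hiP, hiS⟩ := Finset.not_subset.mp (hS P hP)
    exact ⟨i, hiP, by simp [hc, hiS]⟩
  obtain ⟨a, _, hu⟩ := hmvc (∑ i, α i • V i)
  have h1 : α = a := by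
    refine hu α ⟨rfl, ?_⟩
    intro P hP
    refine ⟨fun i _ => le_max_right _ _, ?_⟩
    obtain ⟨i, hiP, hci⟩ := hzero P hP
    exact ⟨i, hiP, by simp [hα, hci]⟩
  have h2 : α' = a := by
    refine hu α' ⟨hsum2, ?_⟩
    intro P hP
    refine ⟨fun i _ => le_max_right _ _, ?_⟩
    obtain ⟨i, hiP, hci⟩ := hzero P hP
    exact ⟨i, hiP, by simp [hα', hci]⟩
  have : c (j : Fin r) = 0 := by rw [hca, h1, h2, sub_self]
  simpa [hc, j.2] using this
end

section
/- Let (Σ, V, Π) be a d-dimensional pseudo-fan satisfying the Min-Value Condition. Then for every β ∈ ℝᵈ there exists a subset S ⊆ V containing no member of Π such that β is a nonnegative real linear combination of the elements of S; in particular the union of the cones of Σ is all of ℝᵈ. -/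
open Finset

theorem stmt_5 (d r : ℕ) (V : Fin r → (Fin d → ℝ)) (Pi : Finset (Finset (Fin r)))
    (hpf : IsPseudoFan d r V Pi) (hmvc : MVC d r V Pi) (β : Fin d → ℝ) :
    ∃ S : Finset (Fin r), (∀ P ∈ Pi, ¬ P ⊆ S) ∧ β ∈ coneOfIdx d r V S := by
  obtain ⟨α, ⟨hsum, hP⟩, -⟩ := hmvc β
  obtain ⟨-, hcov, -⟩ := hpf
  refine ⟨Finset.univ.filter (fun i => α i ≠ 0), ?_, α, ?_, ?_, hsum⟩
  · intro P hPmem hsub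
    obtain ⟨i, hiP, hi0⟩ := (hP P hPmem).2
    have := hsub hiP
    simp [hi0] at this
  · intro i
    obtain ⟨P, hPmem, hiP⟩ := hcov i
    exact (hP P hPmem).1 i hiP
  · intro i hi
    by_contra h
    exact hi (Finset.mem_filter.mpr ⟨Finset.mem_univ i, h⟩)
end

section
/- Let (Σ, V, Π) be a pseudo-fan in ℝᵈ satisfying the Min-Value Condition, and let σ = ⟨S⟩₍≥0₎, τ = ⟨T⟩₍≥0₎ be two cones of Σ (S, T ⊆ V containing no member of Π). Then σ ∩ τ = ⟨S ∩ T⟩₍≥0₎. -/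
open Finset

theorem stmt_6 (d r : ℕ) (V : Fin r → (Fin d → ℝ)) (Pi : Finset (Finset (Fin r)))
    (hpf : IsPseudoFan d r V Pi) (hmvc : MVC d r V Pi)
    (S T : Finset (Fin r)) (hS : ∀ P ∈ Pi, ¬ P ⊆ S) (hT : ∀ P ∈ Pi, ¬ P ⊆ T) :
    coneOfIdx d r V S ∩ coneOfIdx d r V T = coneOfIdx d r V (S ∩ T) := by
  ext x
  constructor
  · rintro ⟨⟨lam, hl0, hlS, hlx⟩, ⟨mu, hm0, hmT, hmx⟩⟩
    obtain ⟨α, _, huniq⟩ := hmvc x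
    have hcond : ∀ (c : Fin r → ℝ) (U : Finset (Fin r)), (∀ i, 0 ≤ c i) →
        (∀ i, i ∉ U → c i = 0) → (∀ P ∈ Pi, ¬ P ⊆ U) →
        ∀ P ∈ Pi, (∀ i ∈ P, 0 ≤ c i) ∧ ∃ i ∈ P, c i = 0 := by
      intro c U hc0 hcU hU P hP
      refine ⟨fun i _ => hc0 i, ?_⟩
      obtain ⟨i, hiP, hiU⟩ := Finset.not_subset.mp (hU P hP)
      exact ⟨i, hiP, hcU i hiU⟩
    have h1 : lam = α := huniq lam ⟨hlx, hcond lam S hl0 hlS hS⟩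
    have h2 : mu = α := huniq mu ⟨hmx, hcond mu T hm0 hmT hT⟩
    refine ⟨lam, hl0, ?_, hlx⟩
    intro i hi
    by_cases hiS : i ∈ S
    · have hiT : i ∉ T := fun hiT => hi (Finset.mem_inter.mpr ⟨hiS, hiT⟩)
      rw [h1, ← h2]; exact hmT i hiT
    · exact hlS i hiS
  · rintro ⟨lam, hl0, hlST, hlx⟩
    exact ⟨⟨lam, hl0, fun i hi => hlST i (fun h => hi (Finset.mem_inter.mp h).1), hlx⟩,
      ⟨lam, hl0, fun i hi => hlST i (fun h => hi (Finset.mem_inter.mp h).2), hlx⟩⟩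
end

section
/- Let d₁ ≥ d₂ > 0 and let y'_(i,j) (for (i,j) in I = ({0,…,d₁}×{0,…,d₂}) \ {(0,0),(d₁,d₂)}, extended by y'_(p,q) = 0 for (p,q) ∉ I) be real numbers satisfying Σ_{j=0}^{d₂} y'_(i,j) ≤ 0 for i = 1,…,d₁ and Σ_{i=0}^{d₁} y'_(i,j) ≤ 0 for j = 1,…,d₂. Define Δ_(p,q)^(s,t) := Σ_{k=p}^{s} Σ_{l=q}^{t} y'_(k,l) if p ≤ s and q ≤ t, and 0 otherwise. Then the system x_(i+1,j) + x_(i,j+1) = max{ y'_(i,j) + x_(i,j) + x_(i+1,j+1), Δ_(i+1,0)^(d₁,j-1) + Δ_(0,j+1)^(i-1,d₂) } for all (i,j) ∈ I, where x_(s,t) := 0 whenever (s,t) ∉ {1,…,d₁}×{1,…,d₂}, has the unique solution x_(i,j) = max{ Δ_(i,0)^(d₁,j-1), Δ_(0,j)^(i-1,d₂) }. -/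
open Finset

/-- The rectangular partial sum `Δ_(p,q)^(s,t) = Σ_{k=p}^{s} Σ_{l=q}^{t} y' (k,l)`,
set to `0` unless `p ≤ s` and `q ≤ t`. -/
noncomputable def Delta (y' : ℤ × ℤ → ℝ) (p q s t : ℤ) : ℝ :=
  if p ≤ s ∧ q ≤ t then ∑ k ∈ Finset.Icc p s, ∑ l ∈ Finset.Icc q t, y' (k, l) else 0


lemma sum_Icc_split (f : ℤ → ℝ) {a m b : ℤ} (h1 : a ≤ m) (h2 : m ≤ b + 1) :
    ∑ k ∈ Icc a b, f k = (∑ k ∈ Icc a (m - 1), f k) + ∑ k ∈ Icc m b, f k := by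
  have hd : Disjoint (Icc a (m - 1)) (Icc m b) := by
    rw [Finset.disjoint_left]
    intro k hk hk'
    simp only [Finset.mem_Icc] at hk hk'
    omega
  have he : Icc a (m - 1) ∪ Icc m b = Icc a b := by
    ext k
    simp only [Finset.mem_union, Finset.mem_Icc]
    omega
  rw [← he, Finset.sum_union hd]

lemma sum_Icc_bot (f : ℤ → ℝ) {a b : ℤ} (h : a ≤ b) :
    ∑ k ∈ Icc a b, f k = f a + ∑ k ∈ Icc (a + 1) b, f k := by
  rw [sum_Icc_split f (show a ≤ a + 1 by omega) (by omega)]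
  congr 1
  have : a + 1 - 1 = a := by omega
  rw [this, Finset.Icc_self, Finset.sum_singleton]

lemma sum_Icc_top (f : ℤ → ℝ) {a b : ℤ} (h : a ≤ b) :
    ∑ k ∈ Icc a b, f k = (∑ k ∈ Icc a (b - 1), f k) + f b := by
  rw [sum_Icc_split f (show a ≤ b from h) (by omega)]
  congr 1
  simp

lemma Delta_empty_row (y' : ℤ × ℤ → ℝ) {p q s t : ℤ} (h : ¬ p ≤ s) :
    Delta y' p q s t = 0 := by
  unfold Delta; rw [if_neg]; tauto

lemma Delta_empty_col (y' : ℤ × ℤ → ℝ) {p q s t : ℤ} (h : ¬ q ≤ t) :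
    Delta y' p q s t = 0 := by
  unfold Delta; rw [if_neg]; tauto

lemma Delta_row_split (y' : ℤ × ℤ → ℝ) {p q s t : ℤ} (h : p ≤ s) :
    Delta y' p q s t = (∑ l ∈ Icc q t, y' (p, l)) + Delta y' (p + 1) q s t := by
  by_cases hqt : q ≤ t
  · by_cases hps : p + 1 ≤ s
    · unfold Delta
      rw [if_pos ⟨h, hqt⟩, if_pos ⟨hps, hqt⟩]
      exact sum_Icc_bot _ h
    · have hps' : p = s := by omega
      subst hps'
      unfold Delta
      rw [if_pos ⟨h, hqt⟩, if_neg (by tauto)]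
      simp
  · rw [Delta_empty_col y' hqt, Delta_empty_col y' hqt, Finset.Icc_eq_empty hqt]
    simp

lemma Delta_row_split_top (y' : ℤ × ℤ → ℝ) {p q s t : ℤ} (h : p ≤ s) :
    Delta y' p q s t = Delta y' p q (s - 1) t + ∑ l ∈ Icc q t, y' (s, l) := by
  by_cases hqt : q ≤ t
  · by_cases hps : p ≤ s - 1
    · unfold Delta
      rw [if_pos ⟨h, hqt⟩, if_pos ⟨hps, hqt⟩]
      exact sum_Icc_top _ h
    · have hps' : p = s := by omega
      subst hps'
      unfold Delta
      rw [if_pos ⟨le_refl _, hqt⟩, if_neg (by tauto)]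
      simp
  · rw [Delta_empty_col y' hqt, Delta_empty_col y' hqt, Finset.Icc_eq_empty hqt]
    simp

lemma Delta_col_split (y' : ℤ × ℤ → ℝ) {p q s t : ℤ} (h : q ≤ t) :
    Delta y' p q s t = (∑ k ∈ Icc p s, y' (k, q)) + Delta y' p (q + 1) s t := by
  by_cases hps : p ≤ s
  · by_cases hqt : q + 1 ≤ t
    · unfold Delta
      rw [if_pos ⟨hps, h⟩, if_pos ⟨hps, hqt⟩, ← Finset.sum_add_distrib]
      exact Finset.sum_congr rfl fun k _ => sum_Icc_bot _ h
    · have hq' : q = t := by omega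
      subst hq'
      unfold Delta
      rw [if_pos ⟨hps, h⟩, if_neg (by tauto)]
      simp
  · rw [Delta_empty_row y' hps, Delta_empty_row y' hps, Finset.Icc_eq_empty hps]
    simp

lemma Delta_col_split_top (y' : ℤ × ℤ → ℝ) {p q s t : ℤ} (h : q ≤ t) :
    Delta y' p q s t = Delta y' p q s (t - 1) + ∑ k ∈ Icc p s, y' (k, t) := by
  by_cases hps : p ≤ s
  · by_cases hqt : q ≤ t - 1
    · unfold Delta
      rw [if_pos ⟨hps, h⟩, if_pos ⟨hps, hqt⟩, ← Finset.sum_add_distrib]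
      exact Finset.sum_congr rfl fun k _ => sum_Icc_top _ h
    · have hq' : q = t := by omega
      subst hq'
      unfold Delta
      rw [if_pos ⟨hps, le_refl _⟩, if_neg (by tauto)]
      simp
  · rw [Delta_empty_row y' hps, Delta_empty_row y' hps, Finset.Icc_eq_empty hps]
    simp

-- the max identity
lemma key_max (a b r c u v e : ℝ) (h1 : r + e + v ≤ 0) (h2 : u + e + c ≤ 0) :
    max a (b + u + v + e) + max (a + r + e + c) b
      = max (e + max (a + r) (b + u) + max (a + c) (b + v)) (a + b) := by
  rcases max_cases a (b + u + v + e) with ⟨e1, i1⟩ | ⟨e1, i1⟩ <;>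
  rcases max_cases (a + r + e + c) b with ⟨e2, i2⟩ | ⟨e2, i2⟩ <;>
  rcases max_cases (a + r) (b + u) with ⟨e3, i3⟩ | ⟨e3, i3⟩ <;>
  rcases max_cases (a + c) (b + v) with ⟨e4, i4⟩ | ⟨e4, i4⟩ <;>
  rw [e1, e2, e3, e4] <;>
  rcases max_cases (e + _ + _) (a + b) with ⟨e5, i5⟩ | ⟨e5, i5⟩ <;>
  rw [e5] <;> linarith

lemma key_max_i0 (a c v e : ℝ) (h2 : e + c ≤ 0) :
    max a (e + v) + 0 = max (e + 0 + max (a + c) v) (a + 0) := by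
  rcases max_cases a (e + v) with ⟨e1, i1⟩ | ⟨e1, i1⟩ <;>
  rcases max_cases (a + c) v with ⟨e4, i4⟩ | ⟨e4, i4⟩ <;>
  rw [e1, e4] <;>
  rcases max_cases (e + 0 + _) (a + 0) with ⟨e5, i5⟩ | ⟨e5, i5⟩ <;>
  rw [e5] <;> linarith

lemma key_max_j0 (b c v e : ℝ) (h1 : e + v ≤ 0) :
    0 + max (e + c) b = max (e + 0 + max c (b + v)) (0 + b) := by
  rcases max_cases (e + c) b with ⟨e1, i1⟩ | ⟨e1, i1⟩ <;>
  rcases max_cases c (b + v) with ⟨e4, i4⟩ | ⟨e4, i4⟩ <;>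
  rw [e1, e4] <;>
  rcases max_cases (e + 0 + _) (0 + b) with ⟨e5, i5⟩ | ⟨e5, i5⟩ <;>
  rw [e5] <;> linarith

lemma forward (d₁ d₂ : ℤ) (hd₂ : 0 < d₂) (hd₁₂ : d₂ ≤ d₁) (y' : ℤ × ℤ → ℝ)
    (hrow : ∀ i : ℤ, 1 ≤ i → i ≤ d₁ → ∑ j ∈ Finset.Icc 0 d₂, y' (i, j) ≤ 0)
    (hcol : ∀ j : ℤ, 1 ≤ j → j ≤ d₂ → ∑ i ∈ Finset.Icc 0 d₁, y' (i, j) ≤ 0)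
    (x : ℤ × ℤ → ℝ)
    (hx0 : ∀ s t : ℤ, ¬ (1 ≤ s ∧ s ≤ d₁ ∧ 1 ≤ t ∧ t ≤ d₂) → x (s, t) = 0)
    (hform : ∀ i j : ℤ, 1 ≤ i → i ≤ d₁ → 1 ≤ j → j ≤ d₂ →
        x (i, j) = max (Delta y' i 0 d₁ (j - 1)) (Delta y' 0 j (i - 1) d₂)) :
    ∀ i j : ℤ, 0 ≤ i → i ≤ d₁ → 0 ≤ j → j ≤ d₂ →
        (i, j) ≠ (0, 0) → (i, j) ≠ (d₁, d₂) →
        x (i + 1, j) + x (i, j + 1) =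
          max (y' (i, j) + x (i, j) + x (i + 1, j + 1))
            (Delta y' (i + 1) 0 d₁ (j - 1) + Delta y' 0 (j + 1) (i - 1) d₂) := by
  have hd₁ : 0 < d₁ := lt_of_lt_of_le hd₂ hd₁₂
  have Lrow : ∀ s : ℤ, 1 ≤ s → Delta y' s 0 d₁ d₂ ≤ 0 := by
    intro s hs
    by_cases h : s ≤ d₁
    · unfold Delta
      rw [if_pos ⟨h, by omega⟩]
      apply Finset.sum_nonpos
      intro k hk
      rw [Finset.mem_Icc] at hk
      exact hrow k (by omega) hk.2
    · rw [Delta_empty_row y' h]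
  have Lcol : ∀ t : ℤ, 1 ≤ t → Delta y' 0 t d₁ d₂ ≤ 0 := by
    intro t ht
    by_cases h : t ≤ d₂
    · unfold Delta
      rw [if_pos ⟨by omega, h⟩, Finset.sum_comm]
      apply Finset.sum_nonpos
      intro l hl
      rw [Finset.mem_Icc] at hl
      exact hcol l (by omega) hl.2
    · rw [Delta_empty_col y' h]
  have xval : ∀ s t : ℤ, 1 ≤ s → s ≤ d₁ + 1 → 1 ≤ t → t ≤ d₂ + 1 →
      x (s, t) = max (Delta y' s 0 d₁ (t - 1)) (Delta y' 0 t (s - 1) d₂) := by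
    intro s t hs1 hs2 ht1 ht2
    by_cases hin : s ≤ d₁ ∧ t ≤ d₂
    · exact hform s t hs1 hin.1 ht1 hin.2
    · rw [hx0 s t (by tauto)]
      by_cases hs : s ≤ d₁
      · -- then t = d₂ + 1
        have ht : t = d₂ + 1 := by omega
        have hB : Delta y' 0 t (s - 1) d₂ = 0 := Delta_empty_col y' (by omega)
        have hA : Delta y' s 0 d₁ (t - 1) ≤ 0 := by
          rw [show t - 1 = d₂ by omega]
          exact Lrow s hs1
        rw [hB, max_eq_right hA]
      · have hs' : s = d₁ + 1 := by omega
        have hA : Delta y' s 0 d₁ (t - 1) = 0 := Delta_empty_row y' (by omega)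
        have hB : Delta y' 0 t (s - 1) d₂ ≤ 0 := by
          rw [show s - 1 = d₁ by omega]
          exact Lcol t ht1
        rw [hA, max_eq_left hB]
  intro i j hi0 hi1 hj0 hj1 hne0 hne1
  have h00 : ¬(i = 0 ∧ j = 0) := fun ⟨h1, h2⟩ => hne0 (by rw [h1, h2])
  have hdd : ¬(i = d₁ ∧ j = d₂) := fun ⟨h1, h2⟩ => hne1 (by rw [h1, h2])
  by_cases hi : 1 ≤ i
  · by_cases hj : 1 ≤ j
    · -- interior case
      rw [xval (i + 1) j (by omega) (by omega) (by omega) (by omega),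
          xval i (j + 1) (by omega) (by omega) (by omega) (by omega),
          xval i j (by omega) (by omega) (by omega) (by omega),
          xval (i + 1) (j + 1) (by omega) (by omega) (by omega) (by omega)]
      simp only [add_sub_cancel_right]
      have hB1 : Delta y' 0 j i d₂ = Delta y' 0 (j + 1) (i - 1) d₂
          + (∑ k ∈ Icc 0 (i - 1), y' (k, j)) + (∑ l ∈ Icc (j + 1) d₂, y' (i, l)) + y' (i, j) := by
        rw [Delta_col_split y' (show j ≤ d₂ by omega),
            Delta_row_split_top y' (show (0:ℤ) ≤ i by omega),
            sum_Icc_top (fun k => y' (k, j)) (show (0:ℤ) ≤ i by omega)]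
        ring
      have hA1 : Delta y' i 0 d₁ j = Delta y' (i + 1) 0 d₁ (j - 1)
          + (∑ l ∈ Icc 0 (j - 1), y' (i, l)) + y' (i, j) + (∑ k ∈ Icc (i + 1) d₁, y' (k, j)) := by
        rw [Delta_col_split_top y' (show (0:ℤ) ≤ j by omega),
            Delta_row_split y' (show i ≤ d₁ by omega),
            sum_Icc_bot (fun k => y' (k, j)) (show i ≤ d₁ by omega)]
        ring
      have hA2 : Delta y' i 0 d₁ (j - 1) = Delta y' (i + 1) 0 d₁ (j - 1)
          + ∑ l ∈ Icc 0 (j - 1), y' (i, l) := by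
        rw [Delta_row_split y' (show i ≤ d₁ by omega)]
        ring
      have hB2 : Delta y' 0 j (i - 1) d₂ = Delta y' 0 (j + 1) (i - 1) d₂
          + ∑ k ∈ Icc 0 (i - 1), y' (k, j) := by
        rw [Delta_col_split y' (show j ≤ d₂ by omega)]
        ring
      have hA3 : Delta y' (i + 1) 0 d₁ j = Delta y' (i + 1) 0 d₁ (j - 1)
          + ∑ k ∈ Icc (i + 1) d₁, y' (k, j) :=
        Delta_col_split_top y' (show (0:ℤ) ≤ j by omega)
      have hB3 : Delta y' 0 (j + 1) i d₂ = Delta y' 0 (j + 1) (i - 1) d₂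
          + ∑ l ∈ Icc (j + 1) d₂, y' (i, l) :=
        Delta_row_split_top y' (show (0:ℤ) ≤ i by omega)
      have h1 : (∑ l ∈ Icc 0 (j - 1), y' (i, l)) + y' (i, j)
          + (∑ l ∈ Icc (j + 1) d₂, y' (i, l)) ≤ 0 := by
        have h := hrow i hi hi1
        rw [sum_Icc_split (fun l => y' (i, l)) (show (0:ℤ) ≤ j by omega) (by omega),
            sum_Icc_bot (fun l => y' (i, l)) (show j ≤ d₂ by omega)] at h
        linarith
      have h2 : (∑ k ∈ Icc 0 (i - 1), y' (k, j)) + y' (i, j)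
          + (∑ k ∈ Icc (i + 1) d₁, y' (k, j)) ≤ 0 := by
        have h := hcol j hj hj1
        rw [sum_Icc_split (fun k => y' (k, j)) (show (0:ℤ) ≤ i by omega) (by omega),
            sum_Icc_bot (fun k => y' (k, j)) (show i ≤ d₁ by omega)] at h
        linarith
      rw [hB1, hA1, hA2, hB2, hA3, hB3]
      exact key_max _ _ _ _ _ _ _ h1 h2
    · -- j = 0, i ≥ 1
      have hjeq : j = 0 := by omega
      subst hjeq
      norm_num
      rw [hx0 (i + 1) 0 (by omega), hx0 i 0 (by omega),
          xval i 1 (by omega) (by omega) (by omega) (by omega),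
          xval (i + 1) 1 (by omega) (by omega) (by omega) (by omega)]
      norm_num
      have hEC : Delta y' i 0 d₁ 0 = y' (i, 0) + ∑ k ∈ Icc (i + 1) d₁, y' (k, 0) := by
        rw [Delta_col_split y' (le_refl 0), Delta_empty_col y' (by omega : ¬(0:ℤ) + 1 ≤ 0),
            sum_Icc_bot (fun k => y' (k, 0)) (show i ≤ d₁ by omega)]
        ring
      have hC : Delta y' (i + 1) 0 d₁ 0 = ∑ k ∈ Icc (i + 1) d₁, y' (k, 0) := by
        rw [Delta_col_split y' (le_refl 0), Delta_empty_col y' (by omega : ¬(0:ℤ) + 1 ≤ 0)]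
        ring
      have hBV : Delta y' 0 1 i d₂ = Delta y' 0 1 (i - 1) d₂ + ∑ l ∈ Icc 1 d₂, y' (i, l) :=
        Delta_row_split_top y' (show (0:ℤ) ≤ i by omega)
      have hZ : Delta y' (i + 1) 0 d₁ (-1) = 0 := Delta_empty_col y' (by omega)
      have h1 : y' (i, 0) + ∑ l ∈ Icc 1 d₂, y' (i, l) ≤ 0 := by
        have h := hrow i hi hi1
        rw [sum_Icc_bot (fun l => y' (i, l)) (show (0:ℤ) ≤ d₂ by omega)] at h
        norm_num at h
        linarith
      rw [hEC, hC, hBV, hZ]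
      simp only [max_def]
      split_ifs <;> linarith
  · -- i = 0, j ≥ 1
    have hieq : i = 0 := by omega
    subst hieq
    have hj : 1 ≤ j := by omega
    norm_num
    rw [hx0 0 j (by omega), hx0 0 (j + 1) (by omega),
        xval 1 j (by omega) (by omega) (by omega) (by omega),
        xval 1 (j + 1) (by omega) (by omega) (by omega) (by omega)]
    norm_num
    have hEV : Delta y' 0 j 0 d₂ = y' (0, j) + ∑ l ∈ Icc (j + 1) d₂, y' (0, l) := by
      rw [Delta_row_split y' (le_refl 0), Delta_empty_row y' (by omega : ¬(0:ℤ) + 1 ≤ 0),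
          sum_Icc_bot (fun l => y' (0, l)) (show j ≤ d₂ by omega)]
      ring
    have hAC : Delta y' 1 0 d₁ j = Delta y' 1 0 d₁ (j - 1) + ∑ k ∈ Icc 1 d₁, y' (k, j) :=
      Delta_col_split_top y' (show (0:ℤ) ≤ j by omega)
    have hV : Delta y' 0 (j + 1) 0 d₂ = ∑ l ∈ Icc (j + 1) d₂, y' (0, l) := by
      rw [Delta_row_split y' (le_refl 0), Delta_empty_row y' (by omega : ¬(0:ℤ) + 1 ≤ 0)]
      ring
    have hZ : Delta y' 0 (j + 1) (-1) d₂ = 0 := Delta_empty_row y' (by omega)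
    have h2 : y' (0, j) + ∑ k ∈ Icc 1 d₁, y' (k, j) ≤ 0 := by
      have h := hcol j hj hj1
      rw [sum_Icc_bot (fun k => y' (k, j)) (show (0:ℤ) ≤ d₁ by omega)] at h
      norm_num at h
      linarith
    rw [hEV, hAC, hV, hZ]
    simp only [max_def]
    split_ifs <;> linarith

noncomputable def Xsol (y' : ℤ × ℤ → ℝ) (d₁ d₂ : ℤ) : ℤ × ℤ → ℝ := fun p =>
  if 1 ≤ p.1 ∧ p.1 ≤ d₁ ∧ 1 ≤ p.2 ∧ p.2 ≤ d₂ then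
    max (Delta y' p.1 0 d₁ (p.2 - 1)) (Delta y' 0 p.2 (p.1 - 1) d₂) else 0

lemma Xsol_zero (y' : ℤ × ℤ → ℝ) (d₁ d₂ : ℤ) (s t : ℤ)
    (h : ¬ (1 ≤ s ∧ s ≤ d₁ ∧ 1 ≤ t ∧ t ≤ d₂)) : Xsol y' d₁ d₂ (s, t) = 0 := if_neg h

lemma Xsol_eq (y' : ℤ × ℤ → ℝ) (d₁ d₂ : ℤ) (i j : ℤ)
    (h1 : 1 ≤ i) (h2 : i ≤ d₁) (h3 : 1 ≤ j) (h4 : j ≤ d₂) :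
    Xsol y' d₁ d₂ (i, j) = max (Delta y' i 0 d₁ (j - 1)) (Delta y' 0 j (i - 1) d₂) :=
  if_pos ⟨h1, h2, h3, h4⟩

lemma reverse (d₁ d₂ : ℤ) (hd₂ : 0 < d₂) (hd₁₂ : d₂ ≤ d₁) (y' : ℤ × ℤ → ℝ)
    (hrow : ∀ i : ℤ, 1 ≤ i → i ≤ d₁ → ∑ j ∈ Finset.Icc 0 d₂, y' (i, j) ≤ 0)
    (hcol : ∀ j : ℤ, 1 ≤ j → j ≤ d₂ → ∑ i ∈ Finset.Icc 0 d₁, y' (i, j) ≤ 0)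
    (x : ℤ × ℤ → ℝ)
    (hx0 : ∀ s t : ℤ, ¬ (1 ≤ s ∧ s ≤ d₁ ∧ 1 ≤ t ∧ t ≤ d₂) → x (s, t) = 0)
    (hsys : ∀ i j : ℤ, 0 ≤ i → i ≤ d₁ → 0 ≤ j → j ≤ d₂ →
        (i, j) ≠ (0, 0) → (i, j) ≠ (d₁, d₂) →
        x (i + 1, j) + x (i, j + 1) =
          max (y' (i, j) + x (i, j) + x (i + 1, j + 1))
            (Delta y' (i + 1) 0 d₁ (j - 1) + Delta y' 0 (j + 1) (i - 1) d₂)) :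
    ∀ i j : ℤ, 1 ≤ i → i ≤ d₁ → 1 ≤ j → j ≤ d₂ →
        x (i, j) = max (Delta y' i 0 d₁ (j - 1)) (Delta y' 0 j (i - 1) d₂) := by
  have hd₁ : 0 < d₁ := lt_of_lt_of_le hd₂ hd₁₂
  set X := Xsol y' d₁ d₂ with hXdef
  have hX0 : ∀ s t : ℤ, ¬ (1 ≤ s ∧ s ≤ d₁ ∧ 1 ≤ t ∧ t ≤ d₂) → X (s, t) = 0 :=
    fun s t h => Xsol_zero y' d₁ d₂ s t h
  have hXform : ∀ i j : ℤ, 1 ≤ i → i ≤ d₁ → 1 ≤ j → j ≤ d₂ →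
      X (i, j) = max (Delta y' i 0 d₁ (j - 1)) (Delta y' 0 j (i - 1) d₂) :=
    fun i j h1 h2 h3 h4 => Xsol_eq y' d₁ d₂ i j h1 h2 h3 h4
  have hXsys := forward d₁ d₂ hd₂ hd₁₂ y' hrow hcol X hX0 hXform
  -- step 1 : row telescoping inequality
  have step1 : ∀ i : ℤ, 1 ≤ i → i ≤ d₁ → ∀ j : ℤ, 0 ≤ j → j ≤ d₂ →
      (∑ l ∈ Icc 0 (j - 1), y' (i, l)) ≤ x (i, j) - x (i + 1, j) := by
    intro i hi1 hi2 j hj0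
    refine Int.le_induction (motive := fun j _ => j ≤ d₂ →
      (∑ l ∈ Icc 0 (j - 1), y' (i, l)) ≤ x (i, j) - x (i + 1, j)) ?_ ?_ j hj0
    · intro _
      rw [hx0 i 0 (by omega), hx0 (i + 1) 0 (by omega), Finset.Icc_eq_empty (by omega)]
      simp
    · intro n hn IH hle
      have heq := hsys i n (by omega) (by omega) (by omega) (by omega)
        (by intro hc; rw [Prod.mk.injEq] at hc; omega)
        (by intro hc; rw [Prod.mk.injEq] at hc; omega)
      have hlm := le_max_left (y' (i, n) + x (i, n) + x (i + 1, n + 1))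
        (Delta y' (i + 1) 0 d₁ (n - 1) + Delta y' 0 (n + 1) (i - 1) d₂)
      rw [← heq] at hlm
      have hsum : (∑ l ∈ Icc 0 (n + 1 - 1), y' (i, l))
          = (∑ l ∈ Icc 0 (n - 1), y' (i, l)) + y' (i, n) := by
        rw [show n + 1 - 1 = n by ring, sum_Icc_top (fun l => y' (i, l)) (show (0:ℤ) ≤ n by omega)]
      rw [hsum]
      have := IH (by omega)
      linarith
  have lowerA : ∀ j : ℤ, 0 ≤ j → j ≤ d₂ → ∀ i : ℤ, i ≤ d₁ + 1 → 1 ≤ i →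
      Delta y' i 0 d₁ (j - 1) ≤ x (i, j) := by
    intro j hj0 hjd i hi
    refine Int.le_induction_down (motive := fun i _ => 1 ≤ i →
      Delta y' i 0 d₁ (j - 1) ≤ x (i, j)) ?_ ?_ i hi
    · intro _
      rw [hx0 (d₁ + 1) j (by omega), Delta_empty_row y' (by omega)]
    · intro n hn IH h1n'
      have hD := Delta_row_split y' (q := 0) (t := j - 1) (show n - 1 ≤ d₁ by omega)
      rw [show n - 1 + 1 = n by ring] at hD
      have hs := step1 (n - 1) (by omega) (by omega) j hj0 hjd
      rw [show n - 1 + 1 = n by ring] at hs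
      have := IH (by omega)
      rw [hD]
      linarith
  -- step 2 : column telescoping inequality
  have step2 : ∀ j : ℤ, 1 ≤ j → j ≤ d₂ → ∀ i : ℤ, 0 ≤ i → i ≤ d₁ →
      (∑ k ∈ Icc 0 (i - 1), y' (k, j)) ≤ x (i, j) - x (i, j + 1) := by
    intro j hj1 hj2 i hi0
    refine Int.le_induction (motive := fun i _ => i ≤ d₁ →
      (∑ k ∈ Icc 0 (i - 1), y' (k, j)) ≤ x (i, j) - x (i, j + 1)) ?_ ?_ i hi0
    · intro _
      rw [hx0 0 j (by omega), hx0 0 (j + 1) (by omega), Finset.Icc_eq_empty (by omega)]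
      simp
    · intro n hn IH hle
      have heq := hsys n j (by omega) (by omega) (by omega) (by omega)
        (by intro hc; rw [Prod.mk.injEq] at hc; omega)
        (by intro hc; rw [Prod.mk.injEq] at hc; omega)
      have hlm := le_max_left (y' (n, j) + x (n, j) + x (n + 1, j + 1))
        (Delta y' (n + 1) 0 d₁ (j - 1) + Delta y' 0 (j + 1) (n - 1) d₂)
      rw [← heq] at hlm
      have hsum : (∑ k ∈ Icc 0 (n + 1 - 1), y' (k, j))
          = (∑ k ∈ Icc 0 (n - 1), y' (k, j)) + y' (n, j) := by
        rw [show n + 1 - 1 = n by ring, sum_Icc_top (fun k => y' (k, j)) (show (0:ℤ) ≤ n by omega)]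
      rw [hsum]
      have := IH (by omega)
      linarith
  have lowerB : ∀ i : ℤ, 1 ≤ i → i ≤ d₁ → ∀ j : ℤ, j ≤ d₂ + 1 → 1 ≤ j →
      Delta y' 0 j (i - 1) d₂ ≤ x (i, j) := by
    intro i hi1 hi2 j hj
    refine Int.le_induction_down (motive := fun j _ => 1 ≤ j →
      Delta y' 0 j (i - 1) d₂ ≤ x (i, j)) ?_ ?_ j hj
    · intro _
      rw [hx0 i (d₂ + 1) (by omega), Delta_empty_col y' (by omega)]
    · intro n hn IH h1n'
      have hD := Delta_col_split y' (p := 0) (s := i - 1) (show n - 1 ≤ d₂ by omega)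
      rw [show n - 1 + 1 = n by ring] at hD
      have hs := step2 (n - 1) (by omega) (by omega) i (by omega) (by omega)
      rw [show n - 1 + 1 = n by ring] at hs
      have := IH (by omega)
      rw [hD]
      linarith
  -- x dominates X everywhere
  have hge : ∀ p : ℤ × ℤ, X p ≤ x p := by
    intro ⟨s, t⟩
    by_cases h : 1 ≤ s ∧ s ≤ d₁ ∧ 1 ≤ t ∧ t ≤ d₂
    · rw [hXform s t h.1 h.2.1 h.2.2.1 h.2.2.2]
      exact max_le (lowerA t (by omega) (by omega) s (by omega) (by omega))
        (lowerB s (by omega) (by omega) t (by omega) (by omega))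
    · rw [hX0 s t h, hx0 s t h]
  -- subharmonicity of the difference
  have c1 : ∀ i j : ℤ, 0 ≤ i → i ≤ d₁ → 0 ≤ j → j ≤ d₂ →
      (i, j) ≠ (0, 0) → (i, j) ≠ (d₁, d₂) →
      x (i + 1, j) - X (i + 1, j) + (x (i, j + 1) - X (i, j + 1)) ≤
        x (i, j) - X (i, j) + (x (i + 1, j + 1) - X (i + 1, j + 1)) := by
    intro i j h1 h2 h3 h4 h5 h6
    have e1 := hsys i j h1 h2 h3 h4 h5 h6
    have e2 := hXsys i j h1 h2 h3 h4 h5 h6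
    have g1 := hge (i, j)
    have g2 := hge (i + 1, j + 1)
    have l1 := le_max_left (y' (i, j) + X (i, j) + X (i + 1, j + 1))
      (Delta y' (i + 1) 0 d₁ (j - 1) + Delta y' 0 (j + 1) (i - 1) d₂)
    have l2 := le_max_right (y' (i, j) + X (i, j) + X (i + 1, j + 1))
      (Delta y' (i + 1) 0 d₁ (j - 1) + Delta y' 0 (j + 1) (i - 1) d₂)
    have hm : max (y' (i, j) + x (i, j) + x (i + 1, j + 1))
          (Delta y' (i + 1) 0 d₁ (j - 1) + Delta y' 0 (j + 1) (i - 1) d₂)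
        ≤ max (y' (i, j) + X (i, j) + X (i + 1, j + 1))
          (Delta y' (i + 1) 0 d₁ (j - 1) + Delta y' 0 (j + 1) (i - 1) d₂)
        + ((x (i, j) - X (i, j)) + (x (i + 1, j + 1) - X (i + 1, j + 1))) :=
      max_le (by linarith) (by linarith)
    linarith [e1, e2, hm]
  -- vertical equality of the difference for 1 ≤ i < d₁
  have c2 : ∀ i : ℤ, 1 ≤ i → i + 1 ≤ d₁ → ∀ j : ℤ, 0 ≤ j → j ≤ d₂ + 1 →
      x (i, j) - X (i, j) = x (i + 1, j) - X (i + 1, j) := by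
    intro i hi1 hi2
    have tUB : ∀ j : ℤ, 0 ≤ j → j ≤ d₂ + 1 →
        x (i, j) - X (i, j) - (x (i + 1, j) - X (i + 1, j)) ≤ 0 := by
      intro j hj0
      refine Int.le_induction (motive := fun j _ => j ≤ d₂ + 1 →
        x (i, j) - X (i, j) - (x (i + 1, j) - X (i + 1, j)) ≤ 0) ?_ ?_ j hj0
      · intro _
        rw [hx0 i 0 (by omega), hx0 (i + 1) 0 (by omega),
            hX0 i 0 (by omega), hX0 (i + 1) 0 (by omega)]
        norm_num
      · intro n hn IH hle
        have := c1 i n (by omega) (by omega) (by omega) (by omega)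
          (by intro hc; rw [Prod.mk.injEq] at hc; omega)
          (by intro hc; rw [Prod.mk.injEq] at hc; omega)
        have := IH (by omega)
        linarith
    have tLB : ∀ j : ℤ, j ≤ d₂ + 1 → 0 ≤ j →
        0 ≤ x (i, j) - X (i, j) - (x (i + 1, j) - X (i + 1, j)) := by
      intro j hj
      refine Int.le_induction_down (motive := fun j _ => 0 ≤ j →
        0 ≤ x (i, j) - X (i, j) - (x (i + 1, j) - X (i + 1, j))) ?_ ?_ j hj
      · intro _
        rw [hx0 i (d₂ + 1) (by omega), hx0 (i + 1) (d₂ + 1) (by omega),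
            hX0 i (d₂ + 1) (by omega), hX0 (i + 1) (d₂ + 1) (by omega)]
        norm_num
      · intro n hn IH h0n
        have hc1 := c1 i (n - 1) (by omega) (by omega) (by omega) (by omega)
          (by intro hc; rw [Prod.mk.injEq] at hc; omega)
          (by intro hc; rw [Prod.mk.injEq] at hc; omega)
        rw [show n - 1 + 1 = n by ring] at hc1
        have := IH (by omega)
        linarith
    intro j hj0 hj1
    have h1 := tUB j hj0 hj1
    have h2 := tLB j hj1 hj0
    linarith
  -- the first row of the difference vanishes
  have c3 : ∀ j : ℤ, j ≤ d₂ + 1 → 1 ≤ j → x (1, j) - X (1, j) ≤ 0 := by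
    intro j hj
    refine Int.le_induction_down (motive := fun j _ => 1 ≤ j →
      x (1, j) - X (1, j) ≤ 0) ?_ ?_ j hj
    · intro _
      rw [hx0 1 (d₂ + 1) (by omega), hX0 1 (d₂ + 1) (by omega)]
      norm_num
    · intro n hn IH h1n
      have hc1 := c1 0 (n - 1) (by omega) (by omega) (by omega) (by omega)
        (by intro hc; rw [Prod.mk.injEq] at hc; omega)
        (by intro hc; rw [Prod.mk.injEq] at hc; omega)
      rw [show n - 1 + 1 = n by ring] at hc1
      rw [hx0 0 (n - 1) (by omega), hx0 0 n (by omega),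
          hX0 0 (n - 1) (by omega), hX0 0 n (by omega)] at hc1
      have := IH (by omega)
      norm_num at hc1
      linarith
  have row1 : ∀ j : ℤ, 1 ≤ j → j ≤ d₂ → x (1, j) - X (1, j) = 0 := by
    intro j h1 h2
    have := c3 j (by omega) h1
    have := hge (1, j)
    linarith
  have alli : ∀ j : ℤ, 1 ≤ j → j ≤ d₂ → ∀ i : ℤ, 1 ≤ i → i ≤ d₁ →
      x (i, j) - X (i, j) = 0 := by
    intro j hj1 hj2 i hi1
    refine Int.le_induction (motive := fun i _ => i ≤ d₁ →
      x (i, j) - X (i, j) = 0) ?_ ?_ i hi1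
    · intro _
      exact row1 j hj1 hj2
    · intro n hn IH hle
      have := c2 n (by omega) (by omega) j (by omega) (by omega)
      have := IH (by omega)
      linarith
  intro i j hi1 hi2 hj1 hj2
  have h0 := alli j hj1 hj2 i hi1 hi2
  have hf := hXform i j hi1 hi2 hj1 hj2
  linarith

theorem stmt_9 (d₁ d₂ : ℤ) (hd₂ : 0 < d₂) (hd₁₂ : d₂ ≤ d₁)
    (y' : ℤ × ℤ → ℝ)
    -- `y'` vanishes outside `I = ({0,…,d₁} × {0,…,d₂}) \ {(0,0), (d₁,d₂)}`
    (hy'0 : ∀ p q : ℤ, ¬ (0 ≤ p ∧ p ≤ d₁ ∧ 0 ≤ q ∧ q ≤ d₂ ∧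
        (p, q) ≠ (0, 0) ∧ (p, q) ≠ (d₁, d₂)) → y' (p, q) = 0)
    (hrow : ∀ i : ℤ, 1 ≤ i → i ≤ d₁ → ∑ j ∈ Finset.Icc 0 d₂, y' (i, j) ≤ 0)
    (hcol : ∀ j : ℤ, 1 ≤ j → j ≤ d₂ → ∑ i ∈ Finset.Icc 0 d₁, y' (i, j) ≤ 0)
    (x : ℤ × ℤ → ℝ)
    -- `x` vanishes outside `{1,…,d₁} × {1,…,d₂}`
    (hx0 : ∀ s t : ℤ, ¬ (1 ≤ s ∧ s ≤ d₁ ∧ 1 ≤ t ∧ t ≤ d₂) → x (s, t) = 0) :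
    -- the system of equations over `I` holds iff `x` is given by the max formula
    (∀ i j : ℤ, 0 ≤ i → i ≤ d₁ → 0 ≤ j → j ≤ d₂ →
        (i, j) ≠ (0, 0) → (i, j) ≠ (d₁, d₂) →
        x (i + 1, j) + x (i, j + 1) =
          max (y' (i, j) + x (i, j) + x (i + 1, j + 1))
            (Delta y' (i + 1) 0 d₁ (j - 1) + Delta y' 0 (j + 1) (i - 1) d₂)) ↔
    (∀ i j : ℤ, 1 ≤ i → i ≤ d₁ → 1 ≤ j → j ≤ d₂ →
        x (i, j) = max (Delta y' i 0 d₁ (j - 1)) (Delta y' 0 j (i - 1) d₂)) := by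
  constructor
  · exact fun hsys => reverse d₁ d₂ hd₂ hd₁₂ y' hrow hcol x hx0 hsys
  · exact fun hform => forward d₁ d₂ hd₂ hd₁₂ y' hrow hcol x hx0 hform
end

section
/- The 5×10 matrix V₍₁,₁₎ and the 5×10 matrix W₍₁,₁₎ satisfy: the sequence 0 → ℤ⁵ →^{tV₍₁,₁₎} ℤ¹⁰ →^{W₍₁,₁₎} ℤ⁵ → 0 is exact; i.e., tV₍₁,₁₎ is injective, W₍₁,₁₎ is surjective, and the image of tV₍₁,₁₎ equals the kernel of W₍₁,₁₎. -/
/-- The weight matrix `W₍₁,₁₎`. -/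
def W11 : Matrix (Fin 5) (Fin 10) ℤ :=
  !![1, 0, 1, 0, 0, 0, 0, 0, 0, -1;
     0, 1, 0, 1, 0, 0, 0, 0, -1, 0;
     0, 0, 0, 0, 1, 0, 1, 0, -1, 0;
     0, 0, 0, 0, 0, 1, 0, 1, 0, -1;
     0, 0, 0, 0, 0, 0, 0, 0, 1, 1]

/-- The vertex matrix `V₍₁,₁₎`. -/
def V11 : Matrix (Fin 5) (Fin 10) ℤ :=
  !![1, 0, -1, 0, 0, 0, 0, 0, 0, 0;
     0, 1, 0, -1, 0, 0, 0, 0, 0, 0;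
     0, 0, 0, 0, 1, 0, -1, 0, 0, 0;
     0, 0, 0, 0, 0, 1, 0, -1, 0, 0;
     0, 0, 1, -1, 0, 0, -1, 1, -1, 1]

/-- A left inverse of `V11.transpose`. -/
def L11 : Matrix (Fin 5) (Fin 10) ℤ :=
  !![1,0,0,0,0,0,0,0,0,0;
     0,1,0,0,0,0,0,0,0,0;
     0,0,0,0,1,0,0,0,0,0;
     0,0,0,0,0,1,0,0,0,0;
     0,0,0,0,0,0,0,0,0,1]

/-- A right inverse of `W11`. -/
def R11 : Matrix (Fin 10) (Fin 5) ℤ :=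
  !![1,0,0,0,0; 0,1,0,0,1; 0,0,0,0,0; 0,0,0,0,0; 0,0,1,0,1;
     0,0,0,1,0; 0,0,0,0,0; 0,0,0,0,0; 0,0,0,0,1; 0,0,0,0,0]

/-- The homotopy matrix. -/
def M11 : Matrix (Fin 10) (Fin 5) ℤ :=
  !![0,0,0,0,0; 0,0,0,0,0; 1,0,0,0,0; 0,1,0,0,1; 0,0,0,0,0;
     0,0,0,0,0; 0,0,1,0,1; 0,0,0,1,0; 0,0,0,0,1; 0,0,0,0,0]

theorem stmt_18 :
    Function.Injective (Matrix.mulVecLin V11.transpose) ∧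
    Function.Surjective (Matrix.mulVecLin W11) ∧
    LinearMap.range (Matrix.mulVecLin V11.transpose) =
      LinearMap.ker (Matrix.mulVecLin W11) := by
  have hL : L11 * V11.transpose = 1 := by decide
  have hR : W11 * R11 = 1 := by decide
  have hWV : W11 * V11.transpose = 0 := by decide
  have hM : V11.transpose * L11 + M11 * W11 = 1 := by decide
  refine ⟨?_, ?_, ?_⟩
  · intro x y h
    have : L11.mulVec (V11.transpose.mulVec x) = L11.mulVec (V11.transpose.mulVec y) := by
      simp only [Matrix.mulVecLin_apply] at h
      rw [h]
    simpa [Matrix.mulVec_mulVec, hL, Matrix.one_mulVec] using this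
  · intro z
    refine ⟨R11.mulVec z, ?_⟩
    simp [Matrix.mulVecLin_apply, Matrix.mulVec_mulVec, hR, Matrix.one_mulVec]
  · ext y
    simp only [LinearMap.mem_range, LinearMap.mem_ker, Matrix.mulVecLin_apply]
    constructor
    · rintro ⟨x, rfl⟩
      simp [Matrix.mulVec_mulVec, hWV, Matrix.zero_mulVec]
    · intro hy
      refine ⟨L11.mulVec y, ?_⟩
      have h1 : (V11.transpose * L11 + M11 * W11).mulVec y = y := by
        rw [hM, Matrix.one_mulVec]
      rw [Matrix.add_mulVec, ← Matrix.mulVec_mulVec, ← Matrix.mulVec_mulVec, hy,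
        Matrix.mulVec_zero, add_zero] at h1
      simpa [Matrix.mulVec_mulVec] using h1
end
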